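/- Let v be a real number with 0 < |v| < 1/3 and let ζ be a real number with ζ > 9·|v|^{2/3}. Then all three roots (counted with multiplicity) of the cubic polynomial x³ + 2v·x² − ζ·x + v are real; equivalently, every complex solution a of the equation a² + 2v·a + v/a = ζ is real. -/

import Mathlib

set_option maxHeartbeats 1000000 in
lemma stmt19_aux (v ζ x y w : ℝ) (hv0 : v ≠ 0) (hw0 : 0 < w) (hv2 : v ^ 2 = w ^ 6)
    (hw3lt : w ^ 3 < 1/3) (hwlt1 : w < 1) (hζw : 9 * w ^ 2 < ζ)
    (hy2pos : 0 < y ^ 2) (hy2 : y ^ 2 = 3*x^2 + 4*v*x - ζ)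
    (hE : 2*ζ*(x+v) = 8*x*(x+v)^2 - v) : False := by
  have hs0 : x + v ≠ 0 := by
    intro h
    rw [h] at hE
    simp at hE
    exact hv0 (by linarith)
  set s := x + v with hsdef
  set t := v / (2*s) with htdef
  have hvt : v = 2*t*s := by rw [htdef]; field_simp
  have hζeq : ζ = 4*x*s - t := by
    have h2s : (2*s) ≠ 0 := by simpa using hs0
    exact mul_right_cancel₀ h2s (show ζ * (2*s) = (4*x*s - t) * (2*s) by
      linear_combination hE - hvt)
  have hζeq' : ζ = 4*x^2 + 4*v*x - t := by rw [hζeq, hsdef]; ring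
  have htx : x^2 < t := by nlinarith [hy2pos, hy2, hζeq']
  have ht0 : 0 < t := lt_of_le_of_lt (sq_nonneg x) htx
  have htt : 0 < t^2 := by positivity
  have hx : x = s*(1-2*t) := by linear_combination -hsdef - hvt
  have hveq : v^2*(1-2*t)^2 = 4*t^2*x^2 := by
    linear_combination ((v+2*t*s)*(1-2*t)^2)*hvt - (4*t^2*(x+s*(1-2*t)))*hx
  have hconstraint : v^2*(1-2*t)^2 < 4*t^3 := by nlinarith [hveq, htx, htt]
  have hζ2 : ζ * t^2 = v^2*(1-2*t) - t^3 := by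
    linear_combination t^2*hζeq + 4*s*t^2*hx - (1-2*t)*(2*s*t+v)*hvt
  have hζ2w : ζ*t^2 = w^6*(1-2*t) - t^3 := by linear_combination hζ2 + (1-2*t)*hv2
  clear_value s t
  clear hζ2 hveq hx hζeq hζeq' hvt hE hsdef htdef hy2 hy2pos
  have hfin : ζ * t^2 < 9*w^2*t^2 := by
    rcases le_or_gt t (1/4) with hcase | hcase
    · -- small t
      have h14 : (1:ℝ)/4 ≤ (1-2*t)^2 := by nlinarith [hcase, ht0]
      have h16 : w^6 < 16*t^3 := by nlinarith [hconstraint, h14, sq_nonneg v, hv2]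
      have hw2t : w^2 < 3*t := by
        by_contra hcon
        push_neg at hcon
        have h3 := pow_le_pow_left₀ (by positivity : (0:ℝ) ≤ 3*t) hcon 3
        nlinarith [h3]
      have h4 : w^4 < 9*t^2 := by nlinarith [hw2t, hw0, ht0, pow_pos hw0 2]
      nlinarith [hζ2w, mul_pos (pow_pos hw0 6) ht0, pow_pos ht0 3,
        mul_pos (pow_pos hw0 2) (show (0:ℝ) < 9*t^2 - w^4 by linarith)]
    · -- large t
      have h6 : w^6 < w^2/3 := by nlinarith [hw3lt, hwlt1, pow_pos hw0 3, pow_pos hw0 2, hw0]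
      have ht2 : (1:ℝ)/16 < t^2 := by nlinarith [hcase, ht0]
      nlinarith [hζ2w, h6, mul_pos (pow_pos hw0 6) ht0, pow_pos ht0 3,
        mul_pos (pow_pos hw0 2) (show (0:ℝ) < 9*t^2 - 1/3 by linarith)]
  nlinarith [hfin, htt, mul_pos (show (0:ℝ) < ζ - 9*w^2 by linarith) htt]

set_option maxHeartbeats 1000000 in
/-- Theorem (Key algebraic lemma for the matrix Dyson equation): if `0 < |v| < 1/3` and
`ζ > 9 |v|^{2/3}`, then every complex root of `x³ + 2v x² − ζ x + v` is real; equivalently,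
every nonzero complex solution `a` of `a² + 2v a + v/a = ζ` is real. -/
theorem stmt19 (v ζ : ℝ) (hv0 : v ≠ 0) (hv : |v| < 1 / 3)
    (hζ : 9 * |v| ^ ((2 : ℝ) / 3) < ζ) :
    (∀ a : ℂ, a ^ 3 + 2 * (v : ℂ) * a ^ 2 - (ζ : ℂ) * a + (v : ℂ) = 0 → a.im = 0) ∧
    (∀ a : ℂ, a ≠ 0 → a ^ 2 + 2 * (v : ℂ) * a + (v : ℂ) / a = (ζ : ℂ) → a.im = 0) := by
  have habs : (0:ℝ) < |v| := abs_pos.2 hv0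
  set w : ℝ := |v| ^ ((1:ℝ)/3) with hwdef
  have hw0 : 0 < w := Real.rpow_pos_of_pos habs _
  have hw3 : w ^ 3 = |v| := by
    rw [hwdef, ← Real.rpow_natCast (|v| ^ ((1:ℝ)/3)) 3, ← Real.rpow_mul (abs_nonneg v)]
    norm_num
  have hw2 : w ^ 2 = |v| ^ ((2:ℝ)/3) := by
    rw [hwdef, ← Real.rpow_natCast (|v| ^ ((1:ℝ)/3)) 2, ← Real.rpow_mul (abs_nonneg v)]
    norm_num
  have hζw : 9 * w ^ 2 < ζ := by rw [hw2]; exact hζ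
  have hv2 : v ^ 2 = w ^ 6 := by
    have h := (sq_abs v).symm
    rw [← hw3] at h
    linear_combination h
  have hw3lt : w ^ 3 < 1/3 := by rw [hw3]; exact hv
  have hwlt1 : w < 1 := by nlinarith [hw0]
  clear_value w
  have key : ∀ a : ℂ, a ^ 3 + 2 * (v : ℂ) * a ^ 2 - (ζ : ℂ) * a + (v : ℂ) = 0 → a.im = 0 := by
    intro a ha
    by_contra hy
    rw [Complex.ext_iff] at ha
    simp only [Complex.add_re, Complex.sub_re, Complex.add_im, Complex.sub_im, Complex.mul_re,
      Complex.mul_im, Complex.ofReal_re, Complex.ofReal_im, Complex.zero_re, Complex.zero_im,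
      pow_succ, pow_zero, one_mul, Complex.one_re, Complex.one_im,
      Complex.re_ofNat, Complex.im_ofNat] at ha
    obtain ⟨hre, him⟩ := ha
    generalize hxg : a.re = x at hre him
    generalize hyg : a.im = y at hre him hy
    ring_nf at hre him
    have hy2 : y ^ 2 = 3*x^2 + 4*v*x - ζ := by
      have h0 : y * (3*x^2 + 4*v*x - ζ - y^2) = 0 := by linear_combination him
      rcases mul_eq_zero.1 h0 with h | h
      · exact absurd h hy
      · linarith
    have hy2pos : 0 < y ^ 2 := by positivity
    have hE : 2*ζ*(x+v) = 8*x*(x+v)^2 - v := by linear_combination hre + (3*x+2*v)*hy2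
    exact absurd (stmt19_aux v ζ x y w hv0 hw0 hv2 hw3lt hwlt1 hζw hy2pos hy2 hE) not_false
  refine ⟨key, ?_⟩
  intro a ha0 heq
  apply key
  field_simp at heq
  linear_combination heq
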